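/- If y ∈ ℤ^{n+1} is dominant with v(y) = e_0 + e_n (i.e. the corresponding weight is λ = ω_0 + ω_n up to adding a multiple of δ), then y covers y − 𝟙; that is, in affine type D_{n+1}^{(2)} the weight ω_0 + ω_n covers ω_0 + ω_n − δ in the dominance order on dominant weights. -/

import Mathlib

/-- Cartan matrix of affine type `D_{n+1}^{(2)}`, indexed by `{0, 1, …, n}`:
`A j j = 2`, `A 0 1 = -2`, `A n (n-1) = -2`, `A j (j±1) = -1` for `1 ≤ j ≤ n-1`,
and all other entries `0`. -/
def cartanD2 (n : ℕ) : Matrix (Fin (n + 1)) (Fin (n + 1)) ℤ :=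
  Matrix.of fun j k =>
    if j = k then 2
    else if (j : ℕ) = 0 ∧ (k : ℕ) = 1 then -2
    else if (j : ℕ) = n ∧ (k : ℕ) + 1 = n then -2
    else if (j : ℕ) + 1 = (k : ℕ) ∨ (k : ℕ) + 1 = (j : ℕ) then -1
    else 0

/-- Value of the weight `ω₀ + ωₙ + Σⱼ xⱼ·αⱼ` on the coroot `αⱼ^∨`. -/
def vD (n : ℕ) (x : Fin (n + 1) → ℤ) (j : Fin (n + 1)) : ℤ :=
  (if (j : ℕ) = 0 then 1 else 0) + (if (j : ℕ) = n then 1 else 0) +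
    (cartanD2 n).mulVec x j

/-- Dominance of the coefficient vector `x`. -/
def DomD (n : ℕ) (x : Fin (n + 1) → ℤ) : Prop := ∀ j, 0 ≤ vD n x j

/-- Each row of `cartanD2` decomposes as a sum of three indicator terms. -/
lemma cartanD2_row (n : ℕ) (j k : Fin (n + 1)) :
    cartanD2 n j k =
      (if (k : ℕ) = (j : ℕ) then 2 else 0)
      + (if (k : ℕ) + 1 = (j : ℕ) then (if (j : ℕ) = n then -2 else -1) else 0)
      + (if (k : ℕ) = (j : ℕ) + 1 then (if (j : ℕ) = 0 then -2 else -1) else 0) := by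
  simp only [cartanD2, Matrix.of_apply, Fin.ext_iff]
  split_ifs <;> omega

/-- Off-diagonal entries of `cartanD2` are nonpositive. -/
lemma cartanD2_offdiag_nonpos (n : ℕ) (j k : Fin (n + 1)) (h : j ≠ k) :
    cartanD2 n j k ≤ 0 := by
  simp only [cartanD2, Matrix.of_apply]
  rw [if_neg h]
  split_ifs <;> omega

/-- Sum of an indicator of a single value over `Fin (n+1)`. -/
lemma sum_single (n m : ℕ) (hm : m ≤ n) (c : ℤ) :
    ∑ k : Fin (n+1), (if (k : ℕ) = m then c else 0) = c := by
  rw [Finset.sum_eq_single (⟨m, by omega⟩ : Fin (n+1))]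
  · simp
  · intro b _ hb
    rw [if_neg]
    intro h
    exact hb (Fin.ext h)
  · intro h; exact absurd (Finset.mem_univ _) h

/-- Each row of `cartanD2` sums to zero (i.e. `A·𝟙 = 0`). -/
lemma cartanD2_rowsum (n : ℕ) (hn : 2 ≤ n) (j : Fin (n+1)) :
    ∑ k, cartanD2 n j k = 0 := by
  have hrw : ∑ k, cartanD2 n j k =
      (∑ k : Fin (n+1), (if (k : ℕ) = (j : ℕ) then (2:ℤ) else 0))
      + (∑ k : Fin (n+1), (if (k : ℕ) + 1 = (j : ℕ) then (if (j : ℕ) = n then (-2:ℤ) else -1) else 0))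
      + (∑ k : Fin (n+1), (if (k : ℕ) = (j : ℕ) + 1 then (if (j : ℕ) = 0 then (-2:ℤ) else -1) else 0)) := by
    rw [← Finset.sum_add_distrib, ← Finset.sum_add_distrib]
    exact Finset.sum_congr rfl fun k _ => cartanD2_row n j k
  have hjn : (j : ℕ) ≤ n := by omega
  have h1 : ∑ k : Fin (n+1), (if (k : ℕ) = (j : ℕ) then (2:ℤ) else 0) = 2 :=
    sum_single n j hjn 2
  have h2 : ∑ k : Fin (n+1), (if (k : ℕ) + 1 = (j : ℕ) then (if (j : ℕ) = n then (-2:ℤ) else -1) else 0)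
      = if (j : ℕ) = 0 then 0 else (if (j : ℕ) = n then -2 else -1) := by
    by_cases hj : (j : ℕ) = 0
    · rw [if_pos hj]
      apply Finset.sum_eq_zero
      intro k _
      rw [if_neg (by omega)]
    · rw [if_neg hj]
      rw [show (∑ k : Fin (n+1), (if (k : ℕ) + 1 = (j : ℕ) then (if (j : ℕ) = n then (-2:ℤ) else -1) else 0))
          = ∑ k : Fin (n+1), (if (k : ℕ) = (j : ℕ) - 1 then (if (j : ℕ) = n then (-2:ℤ) else -1) else 0) from
        Finset.sum_congr rfl fun k _ => if_congr (by omega) rfl rfl]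
      exact sum_single n ((j:ℕ)-1) (by omega) _
  have h3 : ∑ k : Fin (n+1), (if (k : ℕ) = (j : ℕ) + 1 then (if (j : ℕ) = 0 then (-2:ℤ) else -1) else 0)
      = if (j : ℕ) = n then 0 else (if (j : ℕ) = 0 then -2 else -1) := by
    by_cases hj : (j : ℕ) = n
    · rw [if_pos hj]
      apply Finset.sum_eq_zero
      intro k _
      have := k.isLt
      rw [if_neg (by omega)]
    · rw [if_neg hj]
      exact sum_single n ((j:ℕ)+1) (by omega) _
  rw [hrw, h1, h2, h3]
  split_ifs <;> omega

/-- Key estimate: if `z` differs from `y` by `-1` at `j`, by `0` at a neighbour `k0`,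
and lies between `y - 𝟙` and `y`, then `vD n z j` drops below the bound at `j`. -/
lemma keyBound (n : ℕ) (hn : 2 ≤ n) (y z : Fin (n + 1) → ℤ)
    (hle : ∀ k, -1 ≤ z k - y k) (j k0 : Fin (n + 1)) (hjk : j ≠ k0)
    (hej : z j - y j = -1) (hek : z k0 - y k0 = 0)
    (hvyj : vD n y j + cartanD2 n j k0 ≤ -1) :
    vD n z j ≤ -1 := by
  have h1 : ∑ k, cartanD2 n j k * ((z - y) k + 1) ≤
      ∑ k : Fin (n+1), (if k = k0 then cartanD2 n j k0 else 0) := by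
    apply Finset.sum_le_sum
    intro k _
    by_cases hk : k = k0
    · subst hk
      simp [Pi.sub_apply, hek]
    · rw [if_neg hk]
      by_cases hkj : k = j
      · subst hkj
        simp [Pi.sub_apply, hej]
      · have h2 : cartanD2 n j k ≤ 0 := cartanD2_offdiag_nonpos n j k (fun h => hkj h.symm)
        have h3 : 0 ≤ (z - y) k + 1 := by
          have := hle k
          simp only [Pi.sub_apply]
          omega
        exact mul_nonpos_of_nonpos_of_nonneg h2 h3
  have h4 : ∑ k : Fin (n+1), (if k = k0 then cartanD2 n j k0 else 0) = cartanD2 n j k0 := by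
    simp
  have h5 : ∑ k, cartanD2 n j k * ((z - y) k + 1)
      = (cartanD2 n).mulVec (z - y) j + ∑ k, cartanD2 n j k := by
    simp [Matrix.mulVec, dotProduct, mul_add, Finset.sum_add_distrib]
  rw [h5, cartanD2_rowsum n hn j, add_zero, h4] at h1
  have hzy : vD n z j = vD n y j + (cartanD2 n).mulVec (z - y) j := by
    unfold vD
    rw [Matrix.mulVec_sub]
    simp only [Pi.sub_apply]
    ring
  rw [hzy]
  linarith

/-- The entry `A_{i, i+1}`. -/
lemma entry_ab (n : ℕ) (hn : 2 ≤ n) (i : ℕ) (hi : i + 1 ≤ n) (h1 : i < n + 1) (h2 : i + 1 < n + 1) :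
    cartanD2 n ⟨i, h1⟩ ⟨i + 1, h2⟩ = if i = 0 then -2 else -1 := by
  simp only [cartanD2, Matrix.of_apply, Fin.mk.injEq, Fin.val_mk]
  split_ifs <;> first | omega | tauto

/-- The entry `A_{i+1, i}`. -/
lemma entry_ba (n : ℕ) (hn : 2 ≤ n) (i : ℕ) (hi : i + 1 ≤ n) (h1 : i < n + 1) (h2 : i + 1 < n + 1) :
    cartanD2 n ⟨i + 1, h2⟩ ⟨i, h1⟩ = if i + 1 = n then -2 else -1 := by
  simp only [cartanD2, Matrix.of_apply, Fin.mk.injEq, Fin.val_mk]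
  split_ifs <;> first | omega | tauto

/-- in affine type `D_{n+1}^{(2)}`, if `y` is dominant with
`v(y) = e₀ + eₙ` (the weight is `ω₀ + ωₙ` up to a multiple of `δ`), then `y` covers
`y - 𝟙`, i.e. `ω₀ + ωₙ` covers `ω₀ + ωₙ - δ` in the dominance order. -/
theorem stmt_16 (n : ℕ) (hn : 2 ≤ n) (y : Fin (n + 1) → ℤ) (hy : DomD n y)
    (hv : ∀ j, vD n y j =
      (if (j : ℕ) = 0 then 1 else 0) + (if (j : ℕ) = n then 1 else 0)) :
    DomD n (y - 1) ∧ y - 1 < y ∧ ¬∃ z, DomD n z ∧ y - 1 < z ∧ z < y := by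
  have hA1 : ∀ j, (cartanD2 n).mulVec (1 : Fin (n+1) → ℤ) j = 0 := by
    intro j
    simpa [Matrix.mulVec, dotProduct] using cartanD2_rowsum n hn j
  refine ⟨?_, ?_, ?_⟩
  · intro j
    have heq : vD n (y - 1) j = vD n y j := by
      unfold vD
      rw [Matrix.mulVec_sub]
      simp [hA1 j]
    rw [heq]
    exact hy j
  · rw [Pi.lt_def]
    constructor
    · intro j
      simp [Pi.sub_apply]
    · exact ⟨0, by simp⟩
  · rintro ⟨z, hz, hlz, hzy⟩
    rw [Pi.lt_def] at hlz hzy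
    obtain ⟨hle1, i1, hi1⟩ := hlz
    obtain ⟨hle2, i2, hi2⟩ := hzy
    have hub : ∀ k, z k ≤ y k := fun k => hle2 k
    have hlb : ∀ k, y k - 1 ≤ z k := by
      intro k
      have := hle1 k
      simpa using this
    have hz1 : z i1 - y i1 = 0 := by
      have h' : y i1 - 1 < z i1 := by simpa using hi1
      have := hub i1
      omega
    have hz2 : z i2 - y i2 = -1 := by
      have := hlb i2
      omega
    have hdiff : ∃ i : ℕ, ∃ hi : i + 1 ≤ n, ∃ p : i < n + 1, ∃ q : i + 1 < n + 1,
        z ⟨i, p⟩ - y ⟨i, p⟩ ≠ z ⟨i+1, q⟩ - y ⟨i+1, q⟩ := by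
      by_contra hc
      push_neg at hc
      have hconst : ∀ m : ℕ, ∀ hm : m ≤ n,
          z ⟨m, by omega⟩ - y ⟨m, by omega⟩ = z ⟨0, by omega⟩ - y ⟨0, by omega⟩ := by
        intro m
        induction m with
        | zero => intro _; rfl
        | succ p ih =>
          intro hm
          rw [← hc p (by omega) (by omega) (by omega)]
          exact ih (by omega)
      have e1 := hconst (i1 : ℕ) (by have := i1.isLt; omega)
      have e2 := hconst (i2 : ℕ) (by have := i2.isLt; omega)
      rw [Fin.eta] at e1 e2
      omega
    obtain ⟨i, hi, p, q, hne⟩ := hdiff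
    set a : Fin (n+1) := ⟨i, p⟩ with ha
    set b : Fin (n+1) := ⟨i+1, q⟩ with hb
    have hab : a ≠ b := by
      simp [ha, hb, Fin.ext_iff]
    have hda1 := hlb a
    have hda2 := hub a
    have hdb1 := hlb b
    have hdb2 := hub b
    have hle : ∀ k, -1 ≤ z k - y k := by
      intro k
      have := hlb k
      omega
    rcases (show (z a - y a = -1 ∧ z b - y b = 0) ∨ (z a - y a = 0 ∧ z b - y b = -1) from by omega)
      with ⟨h1, h2⟩ | ⟨h1, h2⟩
    · have hvyj : vD n y a + cartanD2 n a b ≤ -1 := by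
        rw [hv a, show cartanD2 n a b = if i = 0 then -2 else -1 from
          entry_ab n hn i hi p q]
        have hva : (a : ℕ) = i := rfl
        split_ifs <;> omega
      have hkey := keyBound n hn y z hle a b hab h1 h2 hvyj
      have := hz a
      omega
    · have hvyj : vD n y b + cartanD2 n b a ≤ -1 := by
        rw [hv b, show cartanD2 n b a = if i + 1 = n then -2 else -1 from
          entry_ba n hn i hi p q]
        have hvb : (b : ℕ) = i + 1 := rfl
        split_ifs <;> first | omega | contradiction
      have hkey := keyBound n hn y z hle b a (Ne.symm hab) h2 h1 hvyj
      have := hz b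
      omega
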